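/- Let E and X be finite sets of equations and variables, var : E → Finset X, and φ(M) = |M| − |var(M)| for M ⊆ E, where var(M) = ⋃_{e∈M} var(e). If M is a PSO set and e ∈ M, then the maximum of φ over all subsets of M \ {e} equals φ(M) − 1; equivalently, φ((M \ {e})⁺) = φ(M) − 1, where (M \ {e})⁺ denotes the overdetermined part of M \ {e}. -/
import Mathlib


open Finset

/-- The structural redundancy `φ(M) = |M| − |var(M)|` (as an integer). -/
def red {E X : Type*} [DecidableEq X] (var : E → Finset X) (M : Finset E) : ℤ :=
  (M.card : ℤ) - (M.biUnion var).card

/-- A set `M` is proper structurally overdetermined (PSO) if it is nonempty and every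
proper subset has strictly smaller redundancy. -/
def IsPSO {E X : Type*} [DecidableEq X] (var : E → Finset X) (M : Finset E) : Prop :=
  M.Nonempty ∧ ∀ M' ⊂ M, red var M' < red var M

/-- If `M` is a PSO set and `e ∈ M`, then the maximum of the
redundancy `φ` over all subsets of `M \ {e}` equals `φ(M) − 1`, i.e.,
`φ((M \ {e})⁺) = φ(M) − 1`. -/
theorem stmt12_redundancy_drops_by_one
    {E X : Type*} [Fintype E] [Fintype X] [DecidableEq E] [DecidableEq X]
    (var : E → Finset X) (M : Finset E) (hM : IsPSO var M) (e : E) (he : e ∈ M) :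
    IsGreatest {z : ℤ | ∃ M' ⊆ M.erase e, red var M' = z} (red var M - 1) := by
  obtain ⟨-, hlt⟩ := hM
  constructor
  · refine ⟨M.erase e, Finset.Subset.refl _, ?_⟩
    have hsub : M.erase e ⊂ M := Finset.erase_ssubset he
    have h1 : red var (M.erase e) < red var M := hlt _ hsub
    have hcard : ((M.erase e).card : ℤ) = (M.card : ℤ) - 1 := by
      rw [Finset.card_erase_of_mem he]
      have := Finset.card_pos.mpr ⟨e, he⟩
      omega
    have hvar : ((M.erase e).biUnion var).card ≤ (M.biUnion var).card :=
      Finset.card_le_card (Finset.biUnion_subset_biUnion_of_subset_left _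
        (Finset.erase_subset _ _))
    unfold red at h1 ⊢
    omega
  · rintro z ⟨M', hM', rfl⟩
    have hss : M' ⊂ M := by
      refine Finset.ssubset_iff_of_subset (hM'.trans (Finset.erase_subset _ _)) |>.mpr ?_
      exact ⟨e, he, fun h => (Finset.mem_erase.mp (hM' h)).1 rfl⟩
    have := hlt _ hss
    omega
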